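/- Let β_0 be a real number with ζ(β_0 - 2) = 2ζ(β_0 - 1), where ζ is the Riemann zeta function restricted to real arguments greater than 1. Then for all real β > β_0 (with β - 2 > 1), Σ_{i=1}^{∞} i(i-2) i^{-β} < 0, and for all real β with 3 < β < β_0, Σ_{i=1}^{∞} i(i-2) i^{-β} > 0. -/

import Mathlib

/-- The Riemann zeta function restricted to real arguments:
`zetaReal x = ∑_{i ≥ 1} i^{-x}`. -/
noncomputable def zetaReal (x : ℝ) : ℝ := ∑' i : ℕ, ((i : ℝ) + 1) ^ (-x)

/-- `Qsum β = ∑_{i ≥ 1} i (i - 2) i^{-β}`. -/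
noncomputable def Qsum (β : ℝ) : ℝ :=
  ∑' i : ℕ, ((i : ℝ) + 1) * (((i : ℝ) + 1) - 2) * ((i : ℝ) + 1) ^ (-β)

lemma summable_aux {p : ℝ} (hp : p < -1) :
    Summable (fun i : ℕ => ((i : ℝ) + 1) ^ p) := by
  have h := Real.summable_nat_rpow.mpr hp
  have := (summable_nat_add_iff (f := fun n : ℕ => (n : ℝ) ^ p) 1).mpr h
  convert this using 2 with i
  · rfl
  push_cast
  ring_nf

lemma term_eq (β : ℝ) (i : ℕ) :
    ((i : ℝ) + 1) * (((i : ℝ) + 1) - 2) * ((i : ℝ) + 1) ^ (-β)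
      = ((i : ℝ) + 1) ^ (-(β - 2)) - 2 * ((i : ℝ) + 1) ^ (-(β - 1)) := by
  have hx : (0 : ℝ) < (i : ℝ) + 1 := by positivity
  have h2 : ((i : ℝ) + 1) ^ (-(β - 2)) = (((i : ℝ) + 1) * ((i : ℝ) + 1)) * ((i : ℝ) + 1) ^ (-β) := by
    rw [show -(β - 2) = 1 + (1 + -β) by ring, Real.rpow_add hx, Real.rpow_add hx,
      Real.rpow_one]
    ring
  have h1 : ((i : ℝ) + 1) ^ (-(β - 1)) = ((i : ℝ) + 1) * ((i : ℝ) + 1) ^ (-β) := by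
    rw [show -(β - 1) = 1 + -β by ring, Real.rpow_add hx, Real.rpow_one]
  rw [h2, h1]; ring

lemma summable_term {β : ℝ} (hβ : 3 < β) :
    Summable (fun i : ℕ => ((i : ℝ) + 1) * (((i : ℝ) + 1) - 2) * ((i : ℝ) + 1) ^ (-β)) := by
  have heq : (fun i : ℕ => ((i : ℝ) + 1) * (((i : ℝ) + 1) - 2) * ((i : ℝ) + 1) ^ (-β))
      = fun i : ℕ => ((i : ℝ) + 1) ^ (-(β - 2)) - 2 * ((i : ℝ) + 1) ^ (-(β - 1)) := by
    funext i; exact term_eq β i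
  rw [heq]
  exact (summable_aux (by linarith)).sub ((summable_aux (by linarith)).mul_left 2)

lemma Qsum_eq {β : ℝ} (hβ : 3 < β) :
    Qsum β = zetaReal (β - 2) - 2 * zetaReal (β - 1) := by
  unfold Qsum zetaReal
  rw [tsum_congr (term_eq β),
    Summable.tsum_sub (summable_aux (p := -(β - 2)) (by linarith))
      ((summable_aux (p := -(β - 1)) (by linarith)).mul_left 2),
    tsum_mul_left]

lemma Qsum_anti {a b : ℝ} (ha : 3 < a) (hab : a < b) : Qsum b < Qsum a := by
  unfold Qsum
  refine Summable.tsum_lt_tsum (i := 2) ?_ ?_ (summable_term (by linarith)) (summable_term ha)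
  · intro i
    cases i with
    | zero => simp [Real.one_rpow]
    | succ j =>
      have hx1 : (1 : ℝ) ≤ ((j : ℝ) + 1) + 1 := by linarith [Nat.cast_nonneg (α := ℝ) j]
      have hc : 0 ≤ (((j : ℝ) + 1) + 1) * ((((j : ℝ) + 1) + 1) - 2) := by
        have : (0 : ℝ) ≤ (j : ℝ) := Nat.cast_nonneg j
        nlinarith
      push_cast
      exact mul_le_mul_of_nonneg_left
        (Real.rpow_le_rpow_of_exponent_le hx1 (by linarith)) hc
  · have h3 : ((2 : ℕ) : ℝ) + 1 = 3 := by norm_num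
    rw [h3]
    have hlt : (3 : ℝ) ^ (-b) < (3 : ℝ) ^ (-a) :=
      Real.rpow_lt_rpow_of_exponent_lt (by norm_num) (by linarith)
    nlinarith [Real.rpow_pos_of_pos (show (0:ℝ) < 3 by norm_num) (-b)]

theorem stmt11 (β0 : ℝ) (h3 : 3 < β0)
    (hroot : zetaReal (β0 - 2) = 2 * zetaReal (β0 - 1)) :
    (∀ β : ℝ, β0 < β → Qsum β < 0) ∧
    (∀ β : ℝ, 3 < β → β < β0 → 0 < Qsum β) := by
  have h0 : Qsum β0 = 0 := by rw [Qsum_eq h3, hroot]; ring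
  constructor
  · intro β hβ
    have := Qsum_anti h3 hβ
    linarith
  · intro β hβ3 hββ0
    have := Qsum_anti hβ3 hββ0
    linarith
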